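/- In bootstrap percolation on Z^2 with Bernoulli(p_c^*) initial configuration, if at time 0 there is a closed horizontal Z^2-crossing of the rectangle R(b', h+delta) (in lattice units scaled by mesh delta), then except on an event of probability at most 2K exp(-alpha (b'-b)/(4 delta)), there is a closed horizontal Z^2-crossing of R(b, h+delta) in the final bootstrapped configuration, for any b < b'. -/

import Mathlib

open MeasureTheory Filter Set

/-- Sites of the lattice `ℤ²`. -/
abbrev Site : Type := ℤ × ℤ

/-- A configuration of open (`true`, i.e. `1`) and closed (`false`, i.e. `0`) sites. -/
abbrev Config : Type := Site → Bool

/-- Nearest-neighbour adjacency in `ℤ²`. -/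
def adj (x y : Site) : Prop := (x.1 - y.1).natAbs + (x.2 - y.2).natAbs = 1

/-- `*`-adjacency: adjacency in the close-packed lattice `ℤ²_cp`. -/
def adjStar (x y : Site) : Prop :=
  x ≠ y ∧ (x.1 - y.1).natAbs ≤ 1 ∧ (x.2 - y.2).natAbs ≤ 1

/-- The four nearest neighbours of a site. -/
def nbrs (x : Site) : Finset Site :=
  {(x.1 + 1, x.2), (x.1 - 1, x.2), (x.1, x.2 + 1), (x.1, x.2 - 1)}

/-- One step of the bootstrap dynamics: a closed site with at least three open
nearest neighbours becomes open; open sites are stable. -/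
def step (ω : Config) : Config := fun x =>
  ω x || decide (3 ≤ ((nbrs x).filter fun y => ω y = true).card)

/-- The configuration after `n` updates (`evolve ω 0 = ω`). -/
def evolve (ω : Config) : ℕ → Config
  | 0 => ω
  | n + 1 => step (evolve ω n)

/-- The site `x` is open in the final (limiting) configuration `ω̄`. -/
def finalOpen (ω : Config) (x : Site) : Prop := ∃ n, evolve ω n x = true

/-- A closed site `x` is stable iff it stays closed at all times, i.e. it is
closed in the final configuration `ω̄`. -/
def stableClosed (ω : Config) (x : Site) : Prop := ∀ n, evolve ω n x = false

/-- A self-avoiding path (with respect to an adjacency relation `A`) all of whose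
sites lie in the set `S`. -/
def IsPathIn (S : Set Site) (A : Site → Site → Prop) (k : ℕ) (π : Fin (k + 1) → Site) : Prop :=
  Function.Injective π ∧ (∀ i : Fin k, A (π i.castSucc) (π i.succ)) ∧ ∀ i, π i ∈ S

/-- `x` and `y` are joined by a path in `S` for the adjacency relation `A`. -/
def ConnIn (S : Set Site) (A : Site → Site → Prop) (x y : Site) : Prop :=
  ∃ (k : ℕ) (π : Fin (k + 1) → Site),
    π 0 = x ∧ π (Fin.last k) = y ∧ IsPathIn S A k π

/-- The plaquette (unit square of four sites) with lower-left corner `c`. -/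
def plaq (c : Site) : Finset Site :=
  {c, (c.1 + 1, c.2), (c.1, c.2 + 1), (c.1 + 1, c.2 + 1)}

/-- A site is protected if it is closed and belongs to a plaquette of closed sites. -/
def IsProtected (ω : Config) (x : Site) : Prop :=
  ω x = false ∧ ∃ c : Site, x ∈ plaq c ∧ ∀ y ∈ plaq c, ω y = false

/-- The partial cluster `C_{(x,x')}`: sites reachable from `x'` by a self-avoiding
`ℤ²`-path whose first step avoids `x` and whose sites all have the state of `x'`. -/
def partialCluster (ω : Config) (x x' : Site) : Set Site :=
  {y | ∃ (k : ℕ) (π : Fin (k + 1) → Site),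
    π 0 = x' ∧ π (Fin.last k) = y ∧ Function.Injective π ∧
    (∀ i : Fin k, adj (π i.castSucc) (π i.succ)) ∧
    (∀ i, ω (π i) = ω x') ∧ ∀ i : Fin (k + 1), (i : ℕ) = 1 → π i ≠ x}

/-- `μ` is the Bernoulli product measure with density `p` of open sites:
all finite-dimensional marginals are products of Bernoulli(`p`) laws. -/
def IsBernoulli (p : ℝ) (μ : Measure Config) : Prop :=
  ∀ (s : Finset Site) (η : Site → Bool),
    μ {ω : Config | ∀ x ∈ s, ω x = η x} =
      ∏ x ∈ s, ENNReal.ofReal (if η x then p else 1 - p)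

/-- `x` belongs to an infinite cluster of `S` for the adjacency relation `A`. -/
def InfClusterIn (S : Set Site) (A : Site → Site → Prop) (x : Site) : Prop :=
  x ∈ S ∧ {y | ConnIn S A x y}.Infinite

/-- The critical probability `p_c` of independent site percolation on `ℤ²`. -/
noncomputable def pc : ℝ :=
  sInf {p : ℝ | p ∈ Set.Icc (0 : ℝ) 1 ∧
    ∀ μ : Measure Config, IsProbabilityMeasure μ → IsBernoulli p μ →
      0 < μ {ω : Config | ∃ x : Site, InfClusterIn {z | ω z = true} adj x}}

/-- A closed horizontal `ℤ²`-crossing (at mesh `δ`) of the rectangle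
`R(b,h) = (-b/2,b/2) × (-h/2,h/2)`: a nearest-neighbour path of sites of `S`
lying in the rectangle and joining its left and right sides. -/
def HCross (S : Set Site) (δ b h : ℝ) : Prop :=
  ∃ (k : ℕ) (π : Fin (k + 1) → Site), IsPathIn S adj k π ∧
    (∀ i, |δ * ((π i).1 : ℝ)| < b / 2 ∧ |δ * ((π i).2 : ℝ)| < h / 2) ∧
    δ * ((π 0).1 : ℝ) ≤ -(b / 2) + δ ∧ b / 2 - δ ≤ δ * ((π (Fin.last k)).1 : ℝ)

/-- An open vertical `*`-crossing (at mesh `δ`) of the rectangle `R(b,h)`: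
a `*`-path of sites of `S` lying in the rectangle and joining its top and
bottom sides. -/
def VCrossStar (S : Set Site) (δ b h : ℝ) : Prop :=
  ∃ (k : ℕ) (π : Fin (k + 1) → Site), IsPathIn S adjStar k π ∧
    (∀ i, |δ * ((π i).1 : ℝ)| < b / 2 ∧ |δ * ((π i).2 : ℝ)| < h / 2) ∧
    h / 2 - δ ≤ δ * ((π 0).2 : ℝ) ∧ δ * ((π (Fin.last k)).2 : ℝ) ≤ -(h / 2) + δ

/-! ### Basic combinatorial lemmas -/

lemma BP.adj_symm {x y : Site} (h : adj x y) : adj y x := by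
  unfold adj at *; omega

lemma BP.mem_nbrs_of_adj {z u : Site} (h : adj z u) : u ∈ nbrs z := by
  obtain ⟨z1, z2⟩ := z; obtain ⟨u1, u2⟩ := u
  unfold adj at h
  simp only [nbrs, Finset.mem_insert, Finset.mem_singleton, Prod.mk.injEq]
  omega

lemma BP.card_nbrs_le (z : Site) : (nbrs z).card ≤ 4 := by
  unfold nbrs
  refine le_trans (Finset.card_insert_le _ _) ?_
  refine le_trans (Nat.succ_le_succ (Finset.card_insert_le _ _)) ?_
  refine le_trans (Nat.succ_le_succ (Nat.succ_le_succ (Finset.card_insert_le _ _))) ?_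
  simp

/-- A set of closed sites in which every site has two distinct neighbours inside
the set stays closed forever. -/
lemma BP.stable_of_two_nbrs (ω : Config) (D : Set Site)
    (hcl : ∀ z ∈ D, ω z = false)
    (h2 : ∀ z ∈ D, ∃ u v : Site, u ∈ D ∧ v ∈ D ∧ u ≠ v ∧ adj z u ∧ adj z v) :
    ∀ z ∈ D, stableClosed ω z := by
  have key : ∀ n, ∀ z ∈ D, evolve ω n z = false := by
    intro n
    induction n with
    | zero => exact hcl
    | succ n ih =>
      intro z hz
      show step (evolve ω n) z = false
      unfold step
      rw [Bool.or_eq_false_iff]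
      constructor
      · exact ih z hz
      · rw [decide_eq_false_iff_not]
        intro hcard
        obtain ⟨u, v, hu, hv, huv, hau, hav⟩ := h2 z hz
        -- u and v are closed neighbours of z
        have hfil : ({u, v} : Finset Site) ⊆ (nbrs z).filter (fun y => ¬ (evolve ω n y = true)) := by
          intro t ht
          simp only [Finset.mem_insert, Finset.mem_singleton] at ht
          rcases ht with rfl | rfl
          · simp [Finset.mem_filter, BP.mem_nbrs_of_adj hau, ih _ hu]
          · simp [Finset.mem_filter, BP.mem_nbrs_of_adj hav, ih _ hv]
        have hc2 : 2 ≤ ((nbrs z).filter (fun y => ¬ (evolve ω n y = true))).card := by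
          have := Finset.card_le_card hfil
          rwa [Finset.card_insert_of_notMem (by simpa using huv), Finset.card_singleton] at this
        have hsplit := Finset.card_filter_add_card_filter_not
          (s := nbrs z) (p := fun y => evolve ω n y = true)
        have := BP.card_nbrs_le z
        omega
  intro z hz n; exact key n z hz

/-! ### All-closed configurations -/

lemma BP.allClosed_evolve (ω : Config) (hall : ∀ z, ω z = false) :
    ∀ n z, evolve ω n z = false := by
  intro n
  induction n with
  | zero => exact hall
  | succ n ih =>
    intro z
    show step (evolve ω n) z = false
    unfold step
    rw [Bool.or_eq_false_iff]
    refine ⟨ih z, ?_⟩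
    rw [decide_eq_false_iff_not]
    intro hcard
    have hemp : (nbrs z).filter (fun y => evolve ω n y = true) = ∅ := by
      apply Finset.filter_false_of_mem
      intro y _; simp [ih y]
    rw [hemp] at hcard; simp at hcard

/-- A straight horizontal crossing made of sites of `S`, when `S` is everything. -/
lemma BP.straight_cross (S : Set Site) (hall : ∀ z : Site, z ∈ S)
    {δ bb H : ℝ} (hδ : 0 < δ) (hb : 0 < bb) (hH : 0 < H) : HCross S δ bb H := by
  have hδ' : δ ≠ 0 := hδ.ne'
  set B : ℝ := bb / (2 * δ) with hBdef
  have hB : 0 < B := by positivity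
  have hbbB : bb = 2 * δ * B := by rw [hBdef]; field_simp
  set xlo : ℤ := ⌊-B⌋ + 1 with hxlo
  set xhi : ℤ := ⌈B⌉ - 1 with hxhi
  have hB1 : -B < (xlo : ℝ) := by rw [hxlo]; push_cast; linarith [Int.lt_floor_add_one (-B)]
  have hB2 : (xlo : ℝ) ≤ -B + 1 := by rw [hxlo]; push_cast; linarith [Int.floor_le (-B)]
  have hB3 : (xhi : ℝ) < B := by rw [hxhi]; push_cast; linarith [Int.ceil_lt_add_one B]
  have hB4 : B - 1 ≤ (xhi : ℝ) := by rw [hxhi]; push_cast; linarith [Int.le_ceil B]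
  have hle : xlo ≤ xhi := by
    have h1 : ⌊-B⌋ < 0 := Int.floor_lt.mpr (by push_cast; linarith)
    have h2 : (0:ℤ) < ⌈B⌉ := Int.lt_ceil.mpr (by push_cast; linarith)
    omega
  set k : ℕ := (xhi - xlo).toNat with hk
  have hkz : (k : ℤ) = xhi - xlo := Int.toNat_of_nonneg (by omega)
  refine ⟨k, fun t => (xlo + (t : ℕ), 0), ⟨?_, ?_, fun _ => hall _⟩, ?_, ?_, ?_⟩
  · intro a b hab
    simp only [Prod.mk.injEq] at hab
    exact Fin.ext (by omega)
  · intro i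
    unfold adj
    simp only [Fin.coe_castSucc, Fin.val_succ]
    push_cast; omega
  · intro t
    dsimp only
    have htk : (t : ℕ) ≤ k := Nat.lt_succ_iff.mp t.isLt
    have hup : (xlo : ℝ) + (t : ℕ) ≤ (xhi : ℝ) := by
      have : (xlo : ℤ) + (t : ℕ) ≤ xhi := by omega
      exact_mod_cast this
    have hlo : -B < (xlo : ℝ) + (t : ℕ) := by
      have ht0 : (0:ℝ) ≤ ((t : ℕ) : ℝ) := Nat.cast_nonneg _
      linarith
    have hhi : (xlo : ℝ) + (t : ℕ) < B := lt_of_le_of_lt hup hB3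
    constructor
    · rw [abs_lt]; push_cast; constructor <;> nlinarith
    · simpa using by positivity
  · dsimp only
    simp only [Fin.val_zero, Nat.cast_zero, add_zero]
    push_cast
    nlinarith
  · dsimp only
    have hlast : ((Fin.last k : Fin (k+1)) : ℕ) = k := rfl
    rw [hlast]
    have hcast : (xlo : ℝ) + (k : ℕ) = (xhi : ℝ) := by
      have : (xlo : ℤ) + (k : ℤ) = xhi := by omega
      exact_mod_cast this
    push_cast
    rw [hcast]
    nlinarith

/-! ### Discrete intermediate value and sub-crossing extraction -/

lemma BP.ivt {k : ℕ} (x : Fin (k+1) → ℤ)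
    (hstep : ∀ (v : ℕ) (h1 : v < k+1) (h2 : v+1 < k+1),
      ((x ⟨v+1, h2⟩ - x ⟨v, h1⟩)).natAbs ≤ 1)
    (h0 : x 0 < 0) (hl : 0 < x (Fin.last k)) : ∃ t, x t = 0 := by
  classical
  set T : Finset (Fin (k+1)) := Finset.univ.filter (fun t => 0 ≤ x t) with hT
  have hne : T.Nonempty := ⟨Fin.last k, by simp [hT, hl.le]⟩
  set t0 := T.min' hne with ht0
  have ht0mem : 0 ≤ x t0 := by
    have := Finset.min'_mem T hne
    rw [← ht0] at this
    simpa [hT] using this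
  have ht0pos : (t0 : ℕ) ≠ 0 := by
    intro h
    have : t0 = 0 := Fin.ext h
    rw [this] at ht0mem; omega
  have h1 : (t0 : ℕ) - 1 < k + 1 := by have := t0.isLt; omega
  have h2 : (t0 : ℕ) - 1 + 1 < k + 1 := by have := t0.isLt; omega
  have hprev : x ⟨(t0 : ℕ) - 1, h1⟩ < 0 := by
    by_contra hc
    push_neg at hc
    have hmem : (⟨(t0 : ℕ) - 1, h1⟩ : Fin (k+1)) ∈ T := by simp [hT, hc]
    have hle := Finset.min'_le T _ hmem
    rw [← ht0] at hle
    have := Fin.le_def.mp hle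
    simp at this
    omega
  obtain ⟨hs1, hs2⟩ : x t0 ≤ x ⟨(t0:ℕ)-1, h1⟩ + 1 ∧ x ⟨(t0:ℕ)-1, h1⟩ ≤ x t0 + 1 := by
    have h3 := hstep ((t0:ℕ)-1) h1 h2
    have heq : (⟨(t0:ℕ)-1+1, h2⟩ : Fin (k+1)) = t0 := Fin.ext (show (t0:ℕ)-1+1 = (t0:ℕ) by omega)
    rw [heq] at h3
    omega
  exact ⟨t0, by omega⟩

set_option maxHeartbeats 1600000 in
/-- From a horizontal crossing of a wide rectangle one can extract a horizontal
crossing of a narrower rectangle of the same height. -/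
lemma BP.extract {S : Set Site} {δ B H bb : ℝ} (hδ : 0 < δ) (hb : 0 < bb) (hbB : bb ≤ B)
    (h : HCross S δ B H) : HCross S δ bb H := by
  classical
  obtain ⟨k, π, ⟨hinj, hadj, hmem⟩, hbox, hstart, hend⟩ := h
  have hadj' : ∀ (v : ℕ) (hv : v < k) (h1 : v < k+1) (h2 : v+1 < k+1),
      adj (π ⟨v, h1⟩) (π ⟨v+1, h2⟩) := by
    intro v hv h1 h2
    have := hadj ⟨v, hv⟩
    simpa [Fin.castSucc_mk, Fin.succ_mk] using this
  have hxstep : ∀ (v : ℕ) (hv : v < k) (h1 : v < k+1) (h2 : v+1 < k+1),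
      ((π ⟨v+1, h2⟩).1 - (π ⟨v, h1⟩).1).natAbs ≤ 1 := by
    intro v hv h1 h2
    have := hadj' v hv h1 h2
    unfold adj at this
    omega
  by_cases hcase : bb ≤ 2 * δ
  · -- find a site with x-coordinate 0 and use a single-site crossing
    have hzero : ∃ t, (π t).1 = 0 := by
      by_cases hB : B ≤ 2 * δ
      · refine ⟨0, ?_⟩
        have h1 := (hbox 0).1
        by_contra hne
        have habs : (1:ℤ) ≤ |(π 0).1| := by rw [Int.abs_eq_natAbs]; omega
        have habs' : (1:ℝ) ≤ |((π 0).1 : ℝ)| := by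
          rw [← Int.cast_abs]
          exact_mod_cast habs
        rw [abs_mul, abs_of_pos hδ] at h1
        nlinarith
      · push_neg at hB
        have h0 : (π 0).1 < 0 := by
          by_contra hc
          push_neg at hc
          have : (0:ℝ) ≤ ((π 0).1 : ℝ) := by exact_mod_cast hc
          nlinarith [hstart]
        have hl : 0 < (π (Fin.last k)).1 := by
          by_contra hc
          push_neg at hc
          have : ((π (Fin.last k)).1 : ℝ) ≤ 0 := by exact_mod_cast hc
          nlinarith [hend]
        exact BP.ivt (fun t => (π t).1) (fun v h1 h2 => hxstep v (by omega) h1 h2) h0 hl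
    obtain ⟨t, ht⟩ := hzero
    refine ⟨0, fun _ => π t, ⟨fun a b _ => Fin.ext (by omega), fun i => i.elim0, fun _ => hmem t⟩, ?_, ?_, ?_⟩
    · intro i
      refine ⟨?_, (hbox t).2⟩
      rw [ht]; simpa using by positivity
    · show δ * ((π t).1 : ℝ) ≤ -(bb/2) + δ
      rw [ht]; push_cast; linarith
    · show bb/2 - δ ≤ δ * ((π t).1 : ℝ)
      rw [ht]; push_cast; linarith
  · push_neg at hcase  -- 2δ < bb
    set TJ : Finset (Fin (k+1)) :=
      Finset.univ.filter (fun t => bb/2 - δ ≤ δ * ((π t).1 : ℝ)) with hTJ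
    have hTJne : TJ.Nonempty := ⟨Fin.last k, by
      simp only [hTJ, Finset.mem_filter, Finset.mem_univ, true_and]; linarith [hend]⟩
    set j0 := TJ.min' hTJne with hj0
    have hj0mem : bb/2 - δ ≤ δ * ((π j0).1 : ℝ) := by
      have := Finset.min'_mem TJ hTJne
      rw [← hj0] at this
      simpa [hTJ] using this
    have hjmin : ∀ t : Fin (k+1), (t:ℕ) < (j0:ℕ) → δ * ((π t).1 : ℝ) < bb/2 - δ := by
      intro t hlt
      by_contra hc
      push_neg at hc
      have hmemt : t ∈ TJ := by
        simp only [hTJ, Finset.mem_filter, Finset.mem_univ, true_and]; exact hc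
      have hle := Finset.min'_le TJ _ hmemt
      rw [← hj0] at hle
      have := Fin.le_def.mp hle
      omega
    set SI : Finset (Fin (k+1)) :=
      Finset.univ.filter (fun t => t ≤ j0 ∧ δ * ((π t).1 : ℝ) ≤ -(bb/2) + δ) with hSI
    have hSIne : SI.Nonempty := ⟨0, by
      simp only [hSI, Finset.mem_filter, Finset.mem_univ, true_and]
      exact ⟨Fin.zero_le _, by linarith [hstart]⟩⟩
    set i0 := SI.max' hSIne with hi0
    have hi0mem : i0 ≤ j0 ∧ δ * ((π i0).1 : ℝ) ≤ -(bb/2) + δ := by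
      have := Finset.max'_mem SI hSIne
      rw [← hi0] at this
      simpa [hSI] using this
    have himax : ∀ t : Fin (k+1), (t:ℕ) ≤ (j0:ℕ) → (i0:ℕ) < (t:ℕ) →
        -(bb/2) + δ < δ * ((π t).1 : ℝ) := by
      intro t htj hlt
      by_contra hc
      push_neg at hc
      have hmemt : t ∈ SI := by
        simp only [hSI, Finset.mem_filter, Finset.mem_univ, true_and]
        exact ⟨Fin.le_def.mpr htj, hc⟩
      have hle := Finset.le_max' SI _ hmemt
      rw [← hi0] at hle
      have := Fin.le_def.mp hle
      omega
    have hij : (i0:ℕ) < (j0:ℕ) := by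
      have hle := Fin.le_def.mp hi0mem.1
      rcases Nat.eq_or_lt_of_le hle with h | h
      · exfalso
        have : (π i0).1 = (π j0).1 := by rw [Fin.ext h]
        rw [this] at hi0mem
        linarith [hi0mem.2, hj0mem]
      · exact h
    set k' : ℕ := (j0 : ℕ) - (i0 : ℕ) with hk'
    have hk'pos : 1 ≤ k' := by omega
    have hidx : ∀ t : Fin (k' + 1), (i0 : ℕ) + (t : ℕ) < k + 1 := by
      intro t
      have h1 := t.isLt
      have h2 := j0.isLt
      omega
    refine ⟨k', fun t => π ⟨(i0 : ℕ) + (t : ℕ), hidx t⟩,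
      ⟨?_, ?_, fun t => hmem _⟩, ?_, ?_, ?_⟩
    · intro a b hab
      have h2 := hinj hab
      have h3 : (i0:ℕ) + (a:ℕ) = (i0:ℕ) + (b:ℕ) := by
        have := congrArg Fin.val h2
        simpa using this
      exact Fin.ext (by omega)
    · intro i
      have hv : (i0 : ℕ) + (i : ℕ) < k := by
        have h1 := i.isLt
        have h2 := j0.isLt
        omega
      show adj (π ⟨(i0:ℕ) + ((i.castSucc : Fin (k'+1)) : ℕ), hidx i.castSucc⟩)
        (π ⟨(i0:ℕ) + ((i.succ : Fin (k'+1)) : ℕ), hidx i.succ⟩)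
      have e1 : (⟨(i0:ℕ) + ((i.castSucc : Fin (k'+1)) : ℕ), hidx i.castSucc⟩ : Fin (k+1))
          = ⟨(i0:ℕ) + (i:ℕ), by omega⟩ := Fin.ext (by simp)
      have e2 : (⟨(i0:ℕ) + ((i.succ : Fin (k'+1)) : ℕ), hidx i.succ⟩ : Fin (k+1))
          = ⟨(i0:ℕ) + (i:ℕ) + 1, by omega⟩ := Fin.ext (by simp [Fin.val_succ]; omega)
      rw [e1, e2]
      exact hadj' _ hv _ _
    · -- box bounds
      intro t
      dsimp only
      refine ⟨?_, (hbox _).2⟩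
      rw [abs_lt]
      have htle : (i0:ℕ) + (t:ℕ) ≤ (j0 : ℕ) := by
        have h1 := t.isLt
        omega
      constructor
      · -- lower bound
        rcases Nat.eq_zero_or_pos (t:ℕ) with ht0 | htpos
        · -- index is i0
          have he : (⟨(i0:ℕ) + (t:ℕ), hidx t⟩ : Fin (k+1)) = i0 := Fin.ext (by simp [ht0])
          rw [he]
          -- use the next site
          have hnlt : (i0 : ℕ) + 1 < k + 1 := by have := j0.isLt; omega
          have hgt : -(bb/2) + δ < δ * ((π ⟨(i0:ℕ)+1, hnlt⟩).1 : ℝ) := by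
            apply himax ⟨(i0:ℕ)+1, hnlt⟩ (by simpa using hij) (by simp)
          have hik : (i0:ℕ) < k := by have := j0.isLt; omega
          have hst := hxstep (i0 : ℕ) hik i0.isLt hnlt
          have hmk : (⟨(i0:ℕ), i0.isLt⟩ : Fin (k+1)) = i0 := Fin.ext rfl
          rw [hmk] at hst
          have hdiff : ((π ⟨(i0:ℕ)+1, hnlt⟩).1 : ℝ) - ((π i0).1 : ℝ) ≤ 1 := by
            have : (π ⟨(i0:ℕ)+1, hnlt⟩).1 - (π i0).1 ≤ 1 := by omega
            exact_mod_cast this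
          nlinarith
        · have := himax ⟨(i0:ℕ) + (t:ℕ), hidx t⟩ (by simpa using htle) (by show (i0:ℕ) < (i0:ℕ) + (t:ℕ); omega)
          linarith
      · -- upper bound
        rcases Nat.eq_or_lt_of_le htle with heq | hlt
        · -- index is j0
          have he : (⟨(i0:ℕ) + (t:ℕ), hidx t⟩ : Fin (k+1)) = j0 := Fin.ext (by simpa using heq)
          rw [he]
          have hprevlt : ((j0:ℕ) - 1) < k + 1 := by have := j0.isLt; omega
          have hprev : δ * ((π ⟨(j0:ℕ)-1, hprevlt⟩).1 : ℝ) < bb/2 - δ := by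
            apply hjmin
            show (j0:ℕ) - 1 < (j0:ℕ); omega
          have hjk : (j0:ℕ) - 1 < k := by have := j0.isLt; omega
          have hstp := hxstep ((j0:ℕ) - 1) hjk hprevlt (by omega)
          have hmk : (⟨(j0:ℕ)-1+1, by omega⟩ : Fin (k+1)) = j0 := Fin.ext (by simp; omega)
          rw [hmk] at hstp
          have hdiff : ((π j0).1 : ℝ) - ((π ⟨(j0:ℕ)-1, hprevlt⟩).1 : ℝ) ≤ 1 := by
            have : (π j0).1 - (π ⟨(j0:ℕ)-1, hprevlt⟩).1 ≤ 1 := by omega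
            exact_mod_cast this
          nlinarith
        · have := hjmin ⟨(i0:ℕ) + (t:ℕ), hidx t⟩ (by simpa using hlt)
          linarith
    · -- start condition
      show δ * ((π ⟨(i0:ℕ) + (((0 : Fin (k'+1))) : ℕ), hidx 0⟩).1 : ℝ) ≤ -(bb/2) + δ
      have he : (⟨(i0:ℕ) + (((0 : Fin (k'+1))) : ℕ), hidx 0⟩ : Fin (k+1)) = i0 :=
        Fin.ext (by simp)
      rw [he]
      exact hi0mem.2
    · -- end condition
      show bb/2 - δ ≤ δ * ((π ⟨(i0:ℕ) + ((Fin.last k' : Fin (k'+1)) : ℕ), hidx (Fin.last k')⟩).1 : ℝ)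
      have he : (⟨(i0:ℕ) + ((Fin.last k' : Fin (k'+1)) : ℕ), hidx (Fin.last k')⟩ : Fin (k+1)) = j0 :=
        Fin.ext (by simp [Fin.val_last]; omega)
      rw [he]
      exact hj0mem

/-! ### A crossing flanked by closed plaquettes is stable -/

lemma BP.plaq_two_nbrs (c : Site) :
    ∀ z ∈ plaq c, ∃ u v : Site, u ∈ plaq c ∧ v ∈ plaq c ∧ u ≠ v ∧ adj z u ∧ adj z v := by
  obtain ⟨c1, c2⟩ := c
  intro z hz
  have hmem : ∀ w : Site, w ∈ plaq (c1, c2) ↔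
      w = (c1, c2) ∨ w = (c1+1, c2) ∨ w = (c1, c2+1) ∨ w = (c1+1, c2+1) := by
    intro w
    simp [plaq]
  rw [hmem] at hz
  rcases hz with rfl | rfl | rfl | rfl
  · exact ⟨(c1+1, c2), (c1, c2+1), by rw [hmem]; tauto, by rw [hmem]; tauto,
      by simp, by unfold adj; simp, by unfold adj; simp⟩
  · exact ⟨(c1, c2), (c1+1, c2+1), by rw [hmem]; tauto, by rw [hmem]; tauto,
      by simp [Prod.ext_iff], by unfold adj; simp, by unfold adj; simp⟩
  · exact ⟨(c1, c2), (c1+1, c2+1), by rw [hmem]; tauto, by rw [hmem]; tauto,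
      by simp [Prod.ext_iff], by unfold adj; simp, by unfold adj; simp⟩
  · exact ⟨(c1+1, c2), (c1, c2+1), by rw [hmem]; tauto, by rw [hmem]; tauto,
      by simp, by unfold adj; simp, by unfold adj; simp⟩

set_option maxHeartbeats 1600000 in
/-- If a closed crossing path has closed plaquettes flanking its two endpoints,
then all its sites are stable, yielding a stable crossing. -/
lemma BP.stable_cross_of_plaquettes (ω : Config) {δ B H : ℝ} (hδ : 0 < δ) (hB : 4*δ ≤ B)
    (k : ℕ) (π : Fin (k+1) → Site)
    (hinj : Function.Injective π) (hadj : ∀ i : Fin k, adj (π i.castSucc) (π i.succ))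
    (hcl : ∀ i, ω (π i) = false)
    (hbox : ∀ i, |δ * ((π i).1:ℝ)| < B/2 ∧ |δ * ((π i).2:ℝ)| < H/2)
    (hstart : δ * ((π 0).1:ℝ) ≤ -(B/2) + δ) (hend : B/2 - δ ≤ δ * ((π (Fin.last k)).1:ℝ))
    (hL : ∀ z ∈ plaq ((π 0).1 - 2, (π 0).2), ω z = false)
    (hR : ∀ z ∈ plaq ((π (Fin.last k)).1 + 1, (π (Fin.last k)).2), ω z = false) :
    HCross {z | stableClosed ω z} δ B H := by
  classical
  have hadjv : ∀ (v : ℕ) (hv : v < k) (h1 : v < k+1) (h2 : v+1 < k+1),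
      adj (π ⟨v, h1⟩) (π ⟨v+1, h2⟩) := by
    intro v hv h1 h2
    have := hadj ⟨v, hv⟩
    simpa [Fin.castSucc_mk, Fin.succ_mk] using this
  have hk1 : 1 ≤ k := by
    by_contra hc
    push_neg at hc
    interval_cases k
    · have hEq : π (Fin.last 0) = π 0 := rfl
      rw [hEq] at hend
      linarith
  set D : Set Site := Set.range π ∪
    (↑(plaq ((π 0).1 - 2, (π 0).2)) ∪ ↑(plaq ((π (Fin.last k)).1 + 1, (π (Fin.last k)).2)))
    with hD
  have plaqL_mem : ∀ w : Site, w ∈ plaq ((π 0).1 - 2, (π 0).2) ↔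
      w = ((π 0).1-2, (π 0).2) ∨ w = ((π 0).1-1, (π 0).2) ∨
      w = ((π 0).1-2, (π 0).2+1) ∨ w = ((π 0).1-1, (π 0).2+1) := by
    intro w
    obtain ⟨w1, w2⟩ := w
    simp only [plaq, Finset.mem_insert, Finset.mem_singleton, Prod.mk.injEq]
    omega
  have plaqR_mem : ∀ w : Site, w ∈ plaq ((π (Fin.last k)).1 + 1, (π (Fin.last k)).2) ↔
      w = ((π (Fin.last k)).1+1, (π (Fin.last k)).2) ∨
      w = ((π (Fin.last k)).1+2, (π (Fin.last k)).2) ∨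
      w = ((π (Fin.last k)).1+1, (π (Fin.last k)).2+1) ∨
      w = ((π (Fin.last k)).1+2, (π (Fin.last k)).2+1) := by
    intro w
    obtain ⟨w1, w2⟩ := w
    simp only [plaq, Finset.mem_insert, Finset.mem_singleton, Prod.mk.injEq]
    omega
  have hclD : ∀ z ∈ D, ω z = false := by
    intro z hz
    rcases hz with ⟨i, rfl⟩ | (hz | hz)
    · exact hcl i
    · exact hL z hz
    · exact hR z hz
  have h2 : ∀ z ∈ D, ∃ u v : Site, u ∈ D ∧ v ∈ D ∧ u ≠ v ∧ adj z u ∧ adj z v := by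
    intro z hz
    rcases hz with ⟨i, rfl⟩ | (hz | hz)
    · by_cases h0 : (i : ℕ) = 0
      · -- left endpoint
        have hi : i = 0 := Fin.ext h0
        subst hi
        have h1lt : 1 < k + 1 := by omega
        refine ⟨π ⟨1, h1lt⟩, ((π 0).1 - 1, (π 0).2), Or.inl ⟨_, rfl⟩,
          Or.inr (Or.inl ?_), ?_, ?_, ?_⟩
        · rw [Finset.mem_coe, plaqL_mem]; tauto
        · -- distinctness
          intro hEq
          have hx : ((π ⟨1, h1lt⟩).1 : ℝ) = ((π 0).1 : ℝ) - 1 := by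
            have := congrArg Prod.fst hEq
            push_cast [this]; push_cast; norm_num
          have hb1 := (hbox ⟨1, h1lt⟩).1
          rw [abs_lt] at hb1
          nlinarith [hb1.1]
        · -- adj (π 0) (π 1)
          have e0 : (⟨0, by omega⟩ : Fin (k+1)) = 0 := Fin.ext rfl
          have := hadjv 0 (by omega) (by omega) h1lt
          rwa [e0] at this
        · unfold adj; simp
      · by_cases hkk : (i : ℕ) = k
        · -- right endpoint
          have hi : i = Fin.last k := Fin.ext (by simpa using hkk)
          subst hi
          have hklt : k - 1 < k + 1 := by omega
          refine ⟨π ⟨k-1, hklt⟩, ((π (Fin.last k)).1 + 1, (π (Fin.last k)).2),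
            Or.inl ⟨_, rfl⟩, Or.inr (Or.inr ?_), ?_, ?_, ?_⟩
          · rw [Finset.mem_coe, plaqR_mem]; tauto
          · intro hEq
            have hx : ((π ⟨k-1, hklt⟩).1 : ℝ) = ((π (Fin.last k)).1 : ℝ) + 1 := by
              have := congrArg Prod.fst hEq
              push_cast [this]; push_cast; norm_num
            have hb1 := (hbox ⟨k-1, hklt⟩).1
            rw [abs_lt] at hb1
            nlinarith [hb1.2]
          · -- adj (π last) (π (k-1))
            have hlast : (⟨k-1+1, by omega⟩ : Fin (k+1)) = Fin.last k :=
              Fin.ext (show k-1+1 = k by omega)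
            have := hadjv (k-1) (by omega) hklt (by omega)
            rw [hlast] at this
            exact BP.adj_symm this
          · unfold adj; simp
        · -- interior site
          have hipos : 0 < (i : ℕ) := Nat.pos_of_ne_zero h0
          have hiklt : (i : ℕ) < k := lt_of_le_of_ne (by omega) hkk
          have hm1 : (i : ℕ) - 1 < k + 1 := by omega
          have hp1 : (i : ℕ) + 1 < k + 1 := by omega
          refine ⟨π ⟨(i:ℕ)-1, hm1⟩, π ⟨(i:ℕ)+1, hp1⟩, Or.inl ⟨_, rfl⟩, Or.inl ⟨_, rfl⟩,
            ?_, ?_, ?_⟩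
          · intro hEq
            have hval : (i:ℕ)-1 = (i:ℕ)+1 := congrArg Fin.val (hinj hEq)
            omega
          · have heqi : (⟨(i:ℕ)-1+1, by omega⟩ : Fin (k+1)) = i :=
              Fin.ext (show (i:ℕ)-1+1 = (i:ℕ) by omega)
            have := hadjv ((i:ℕ)-1) (by omega) hm1 (by omega)
            rw [heqi] at this
            exact BP.adj_symm this
          · have heqi : (⟨(i:ℕ), by omega⟩ : Fin (k+1)) = i := Fin.ext rfl
            have := hadjv (i:ℕ) hiklt (by omega) hp1
            rwa [heqi] at this
    · obtain ⟨u, v, hu, hv, huv, hau, hav⟩ := BP.plaq_two_nbrs _ z hz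
      exact ⟨u, v, Or.inr (Or.inl hu), Or.inr (Or.inl hv), huv, hau, hav⟩
    · obtain ⟨u, v, hu, hv, huv, hau, hav⟩ := BP.plaq_two_nbrs _ z hz
      exact ⟨u, v, Or.inr (Or.inr hu), Or.inr (Or.inr hv), huv, hau, hav⟩
  have hstable := BP.stable_of_two_nbrs ω D hclD h2
  exact ⟨k, π, ⟨hinj, hadj, fun i => hstable _ (Or.inl ⟨i, rfl⟩)⟩, hbox, hstart, hend⟩

/-! ### Cylinders and tests -/

def BP.normC (F : Finset Site) (f : Config) : Config := fun z => if z ∈ F then f z else false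

def BP.Cyl (F : Finset Site) (σ : Config) : Set Config := {ω | ∀ z ∈ F, ω z = σ z}

lemma BP.cyl_eq_biInter (F : Finset Site) (σ : Config) :
    BP.Cyl F σ = ⋂ z ∈ F, {ω : Config | ω z = σ z} := by
  ext ω; simp [BP.Cyl]

lemma BP.measurableSet_cyl (F : Finset Site) (σ : Config) : MeasurableSet (BP.Cyl F σ) := by
  rw [BP.cyl_eq_biInter]
  refine Set.Finite.measurableSet_biInter F.finite_toSet fun z _ => ?_
  have hm : Measurable fun ω : Config => ω z := measurable_pi_apply z
  exact hm (measurableSet_singleton (σ z))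

lemma BP.measurableSet_fail (T : Finset Site) :
    MeasurableSet {ω : Config | ∃ t ∈ T, ω t = true} := by
  have : {ω : Config | ∃ t ∈ T, ω t = true} = ⋃ t ∈ T, {ω : Config | ω t = true} := by
    ext ω; simp
  rw [this]
  refine Set.Finite.measurableSet_biUnion T.finite_toSet fun z _ => ?_
  have hm : Measurable fun ω : Config => ω z := measurable_pi_apply z
  exact hm (measurableSet_singleton true)

lemma BP.mu_cyl {p : ℝ} {μ : Measure Config} (hμ : IsBernoulli p μ) (F : Finset Site)
    (σ : Config) :
    μ (BP.Cyl F σ) = ∏ z ∈ F, ENNReal.ofReal (if σ z then p else 1 - p) := hμ F σ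

lemma BP.mu_cyl_le_one {p : ℝ} {μ : Measure Config} [IsProbabilityMeasure μ]
    (F : Finset Site) (σ : Config) : μ (BP.Cyl F σ) ≤ 1 := prob_le_one

lemma BP.cyl_fail_le {p : ℝ} {μ : Measure Config} [IsProbabilityMeasure μ]
    (hμ : IsBernoulli p μ) (hp0 : 0 ≤ p) (hp1 : p ≤ 1)
    (F T : Finset Site) (hdisj : ∀ t ∈ T, t ∉ F) (hcard : T.card ≤ 8) (σ : Config) :
    μ (BP.Cyl F σ ∩ {ω | ∃ t ∈ T, ω t = true})
      ≤ ENNReal.ofReal (1 - (1-p)^8) * μ (BP.Cyl F σ) := by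
  classical
  set q : ENNReal := ENNReal.ofReal (1-p) with hq
  have hq1 : q ≤ 1 := by
    rw [hq, ← ENNReal.ofReal_one]
    exact ENNReal.ofReal_le_ofReal (by linarith)
  set η : Config := fun z => if z ∈ F then σ z else false with hη
  have hset : BP.Cyl F σ ∩ {ω : Config | ∀ t ∈ T, ω t = false} = BP.Cyl (F ∪ T) η := by
    ext ω
    simp only [BP.Cyl, Set.mem_inter_iff, Set.mem_setOf_eq, Finset.mem_union]
    constructor
    · rintro ⟨h1, h2⟩ z hz
      rcases hz with hz | hz
      · simp only [hη, if_pos hz]; exact h1 z hz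
      · simp only [hη, if_neg (hdisj z hz)]; exact h2 z hz
    · intro hωη
      constructor
      · intro z hz
        have hhz := hωη z (Or.inl hz)
        simp only [hη, if_pos hz] at hhz; exact hhz
      · intro t ht
        have hht := hωη t (Or.inr ht)
        simp only [hη, if_neg (hdisj t ht)] at hht; exact hht
  have hdisjFT : Disjoint F T := Finset.disjoint_right.mpr hdisj
  have hall : μ (BP.Cyl F σ ∩ {ω : Config | ∀ t ∈ T, ω t = false})
      = μ (BP.Cyl F σ) * q ^ T.card := by
    rw [hset, BP.mu_cyl hμ, Finset.prod_union hdisjFT, BP.mu_cyl hμ]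
    congr 1
    · apply Finset.prod_congr rfl
      intro z hz
      rw [hη]; simp only [if_pos hz]
    · rw [Finset.prod_congr rfl (fun z hz => ?_), Finset.prod_const]
      rw [hη]; simp only [if_neg (hdisj z hz), Bool.false_eq_true, if_false]; rfl
  have hsplit : BP.Cyl F σ ∩ {ω : Config | ∃ t ∈ T, ω t = true}
      = BP.Cyl F σ \ (BP.Cyl F σ ∩ {ω : Config | ∀ t ∈ T, ω t = false}) := by
    ext ω
    simp only [Set.mem_inter_iff, Set.mem_diff, Set.mem_setOf_eq]
    constructor
    · rintro ⟨h1, t, ht, htrue⟩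
      exact ⟨h1, fun hc => by have := hc.2 t ht; rw [htrue] at this; exact Bool.true_eq_false.mp this⟩
    · rintro ⟨h1, h2⟩
      refine ⟨h1, ?_⟩
      by_contra hc
      push_neg at hc
      apply h2
      refine ⟨h1, fun t ht => ?_⟩
      cases hωt : ω t
      · rfl
      · exact absurd hωt (hc t ht)
  have hfin : μ (BP.Cyl F σ ∩ {ω : Config | ∀ t ∈ T, ω t = false}) ≠ ⊤ :=
    (lt_of_le_of_lt (measure_mono Set.inter_subset_left)
      (lt_of_le_of_lt prob_le_one (by norm_num))).ne
  have hmeas : MeasurableSet (BP.Cyl F σ ∩ {ω : Config | ∀ t ∈ T, ω t = false}) := by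
    rw [hset]; exact BP.measurableSet_cyl _ _
  rw [hsplit, measure_diff Set.inter_subset_left hmeas.nullMeasurableSet hfin, hall]
  -- now : μC - μC * q^card ≤ ofReal(1-(1-p)^8) * μC
  have h8 : q ^ 8 ≤ q ^ T.card := pow_le_pow_of_le_one zero_le hq1 hcard
  have step1 : μ (BP.Cyl F σ) - μ (BP.Cyl F σ) * q ^ T.card
      ≤ μ (BP.Cyl F σ) - μ (BP.Cyl F σ) * q ^ 8 :=
    tsub_le_tsub_left (mul_le_mul_right h8 _) _
  refine le_trans step1 ?_
  have hr1 : q ^ 8 ≤ 1 := pow_le_one' hq1 8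
  have step2 : μ (BP.Cyl F σ) - μ (BP.Cyl F σ) * q ^ 8 ≤ (1 - q ^ 8) * μ (BP.Cyl F σ) := by
    rw [tsub_le_iff_right]
    have hre : (1 - q ^ 8) * μ (BP.Cyl F σ) + μ (BP.Cyl F σ) * q ^ 8 = μ (BP.Cyl F σ) := by
      rw [mul_comm (μ (BP.Cyl F σ)) (q^8), ← add_mul, tsub_add_cancel_of_le hr1, one_mul]
    rw [hre]
  refine le_trans step2 (le_of_eq ?_)
  have hfac : (1 : ENNReal) - q ^ 8 = ENNReal.ofReal (1 - (1-p)^8) := by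
    rw [hq, ← ENNReal.ofReal_pow (by linarith : (0:ℝ) ≤ 1 - p) 8,
      ← ENNReal.ofReal_one, ← ENNReal.ofReal_sub _ (by positivity)]
  rw [hfac]

/-! ### The flanking test set attached to the endpoints of a crossing -/

def BP.testOf (eL eR : Site) : Finset Site :=
  {(eL.1-1, eL.2), (eL.1-2, eL.2), (eL.1-1, eL.2+1), (eL.1-2, eL.2+1),
   (eR.1+1, eR.2), (eR.1+2, eR.2), (eR.1+1, eR.2+1), (eR.1+2, eR.2+1)}

lemma BP.testOf_mem {eL eR : Site} {t : Site} :
    t ∈ BP.testOf eL eR ↔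
      t = (eL.1-1, eL.2) ∨ t = (eL.1-2, eL.2) ∨ t = (eL.1-1, eL.2+1) ∨ t = (eL.1-2, eL.2+1) ∨
      t = (eR.1+1, eR.2) ∨ t = (eR.1+2, eR.2) ∨ t = (eR.1+1, eR.2+1) ∨ t = (eR.1+2, eR.2+1) := by
  simp [BP.testOf]

lemma BP.testOf_card (eL eR : Site) : (BP.testOf eL eR).card ≤ 8 := by
  unfold BP.testOf
  refine le_trans (Finset.card_insert_le _ _) (Nat.succ_le_succ ?_)
  refine le_trans (Finset.card_insert_le _ _) (Nat.succ_le_succ ?_)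
  refine le_trans (Finset.card_insert_le _ _) (Nat.succ_le_succ ?_)
  refine le_trans (Finset.card_insert_le _ _) (Nat.succ_le_succ ?_)
  refine le_trans (Finset.card_insert_le _ _) (Nat.succ_le_succ ?_)
  refine le_trans (Finset.card_insert_le _ _) (Nat.succ_le_succ ?_)
  refine le_trans (Finset.card_insert_le _ _) (Nat.succ_le_succ ?_)
  simp

open Classical in
noncomputable def BP.testSet (S : Set Site) (δ bj hh : ℝ) : Finset Site :=
  if hH : HCross S δ bj hh then
    BP.testOf (hH.choose_spec.choose 0) (hH.choose_spec.choose (Fin.last hH.choose))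
  else ∅

lemma BP.testSet_spec {S : Set Site} {δ bj hh : ℝ} (hH : HCross S δ bj hh) :
    ∃ (k : ℕ) (π : Fin (k+1) → Site), IsPathIn S adj k π ∧
      (∀ i, |δ * ((π i).1 : ℝ)| < bj / 2 ∧ |δ * ((π i).2 : ℝ)| < hh / 2) ∧
      δ * ((π 0).1 : ℝ) ≤ -(bj / 2) + δ ∧ bj / 2 - δ ≤ δ * ((π (Fin.last k)).1 : ℝ) ∧
      BP.testSet S δ bj hh = BP.testOf (π 0) (π (Fin.last k)) := by
  refine ⟨hH.choose, hH.choose_spec.choose, ?_⟩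
  obtain ⟨h1, h2, h3, h4⟩ := hH.choose_spec.choose_spec
  exact ⟨h1, h2, h3, h4, by rw [BP.testSet, dif_pos hH]⟩

lemma BP.mem_testSet_cross {S : Set Site} {δ bj hh : ℝ} {t : Site}
    (ht : t ∈ BP.testSet S δ bj hh) : HCross S δ bj hh := by
  by_contra hc
  rw [BP.testSet, dif_neg hc] at ht
  exact absurd ht (Finset.notMem_empty t)

set_option maxHeartbeats 1600000 in
lemma BP.testOf_bounds {δ B hh : ℝ} (hδ : 0 < δ) {eL eR : Site}
    (hL1 : |δ * (eL.1:ℝ)| < B/2) (hL2 : |δ * (eL.2:ℝ)| < hh/2)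
    (hLs : δ * (eL.1:ℝ) ≤ -(B/2) + δ)
    (hR1 : |δ * (eR.1:ℝ)| < B/2) (hR2 : |δ * (eR.2:ℝ)| < hh/2)
    (hRs : B/2 - δ ≤ δ * (eR.1:ℝ)) :
    ∀ t ∈ BP.testOf eL eR, ¬(|δ * (t.1:ℝ)| < B/2) ∧
      (|δ * (t.1:ℝ)| < (B + 4*δ)/2 ∧ |δ * (t.2:ℝ)| < hh/2 + δ) := by
  intro t ht
  rw [BP.testOf_mem] at ht
  rw [abs_lt] at hL1 hL2 hR1 hR2
  obtain ⟨hL1a, hL1b⟩ := hL1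
  obtain ⟨hL2a, hL2b⟩ := hL2
  obtain ⟨hR1a, hR1b⟩ := hR1
  obtain ⟨hR2a, hR2b⟩ := hR2
  ring_nf at hL1a hL1b hL2a hL2b hR1a hR1b hR2a hR2b hLs hRs
  rcases ht with rfl|rfl|rfl|rfl|rfl|rfl|rfl|rfl <;>
  · refine ⟨?_, ?_, ?_⟩
    · rw [not_lt, le_abs]
      push_cast
      ring_nf
      first
        | (left; linarith) | (right; linarith)
    · rw [abs_lt]
      push_cast
      ring_nf
      constructor <;> linarith
    · rw [abs_lt]
      push_cast
      ring_nf
      constructor <;> linarith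

/-! ### Finite boxes of sites -/

noncomputable def BP.cols (X : ℝ) : Finset ℤ := Finset.Ioo ⌊-X⌋ ⌈X⌉

lemma BP.mem_cols {X : ℝ} {x : ℤ} : x ∈ BP.cols X ↔ -X < (x:ℝ) ∧ (x:ℝ) < X := by
  simp only [BP.cols, Finset.mem_Ioo]
  rw [Int.floor_lt, Int.lt_ceil]

noncomputable def BP.box (δ bj hh : ℝ) : Finset Site :=
  (BP.cols (bj/(2*δ))) ×ˢ (BP.cols ((hh/2 + δ)/δ))

lemma BP.mem_box {δ bj hh : ℝ} (hδ : 0 < δ) {z : Site} :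
    z ∈ BP.box δ bj hh ↔
      (-(bj/2) < δ * (z.1:ℝ) ∧ δ * (z.1:ℝ) < bj/2) ∧
      (-(hh/2 + δ) < δ * (z.2:ℝ) ∧ δ * (z.2:ℝ) < hh/2 + δ) := by
  obtain ⟨z1, z2⟩ := z
  have hδ' : δ ≠ 0 := hδ.ne'
  have e1 : δ * (bj/(2*δ)) = bj / 2 := by field_simp
  have e2 : δ * ((hh/2 + δ)/δ) = hh/2 + δ := by field_simp
  simp only [BP.box, Finset.mem_product, BP.mem_cols]
  constructor
  · rintro ⟨⟨h1, h2⟩, h3, h4⟩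
    refine ⟨⟨?_, ?_⟩, ?_, ?_⟩
    · rw [← e1, ← mul_neg]; exact (mul_lt_mul_iff_right₀ hδ).mpr h1
    · rw [← e1]; exact (mul_lt_mul_iff_right₀ hδ).mpr h2
    · rw [← e2, ← mul_neg]; exact (mul_lt_mul_iff_right₀ hδ).mpr h3
    · rw [← e2]; exact (mul_lt_mul_iff_right₀ hδ).mpr h4
  · rintro ⟨⟨h1, h2⟩, h3, h4⟩
    refine ⟨⟨?_, ?_⟩, ?_, ?_⟩
    · rw [← e1, ← mul_neg] at h1; exact (mul_lt_mul_iff_right₀ hδ).mp h1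
    · rw [← e1] at h2; exact (mul_lt_mul_iff_right₀ hδ).mp h2
    · rw [← e2, ← mul_neg] at h3; exact (mul_lt_mul_iff_right₀ hδ).mp h3
    · rw [← e2] at h4; exact (mul_lt_mul_iff_right₀ hδ).mp h4

lemma BP.site_mem_box {δ B hh : ℝ} (hδ : 0 < δ) {z : Site}
    (h1 : |δ * (z.1:ℝ)| < B/2) (h2 : |δ * (z.2:ℝ)| < hh/2) : z ∈ BP.box δ B hh := by
  rw [BP.mem_box hδ]
  rw [abs_lt] at h1 h2
  exact ⟨⟨h1.1, h1.2⟩, ⟨by linarith [h2.1, hδ], by linarith [h2.2, hδ]⟩⟩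

lemma BP.box_mono {δ B B' hh : ℝ} (hδ : 0 < δ) (hBB : B ≤ B') :
    BP.box δ B hh ⊆ BP.box δ B' hh := by
  intro z hz
  rw [BP.mem_box hδ] at hz ⊢
  obtain ⟨⟨h1, h2⟩, h3⟩ := hz
  exact ⟨⟨by linarith, by linarith⟩, h3⟩

lemma BP.hcross_congr {σA σB : Config} {δ B hh : ℝ} (hδ : 0 < δ)
    (hagree : ∀ z ∈ BP.box δ B hh, σA z = σB z)
    (hH : HCross {z | σA z = false} δ B hh) : HCross {z | σB z = false} δ B hh := by
  obtain ⟨k, π, ⟨hinj, hadj, hmem⟩, hbox, hstart, hend⟩ := hH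
  refine ⟨k, π, ⟨hinj, hadj, fun i => ?_⟩, hbox, hstart, hend⟩
  have hsite : π i ∈ BP.box δ B hh := BP.site_mem_box hδ (hbox i).1 (hbox i).2
  show σB (π i) = false
  rw [← hagree _ hsite]
  exact hmem i

lemma BP.mem_plaq {c w : Site} :
    w ∈ plaq c ↔ w = c ∨ w = (c.1+1,c.2) ∨ w = (c.1,c.2+1) ∨ w = (c.1+1,c.2+1) := by
  simp [plaq]

set_option maxHeartbeats 1600000 in
/-- A successful flanking test turns a crossing of closed sites into a stable crossing. -/
lemma BP.test_works (ω σ : Config) {δ B hh : ℝ} (hδ : 0 < δ) (hB : 4*δ ≤ B)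
    (hagree : ∀ z ∈ BP.box δ B hh, ω z = σ z)
    (hH : HCross {z | σ z = false} δ B hh)
    (hT : ∀ t ∈ BP.testSet {z | σ z = false} δ B hh, ω t = false) :
    HCross {z | stableClosed ω z} δ B hh := by
  obtain ⟨k, π, ⟨hinj, hadj, hmem⟩, hbox, hstart, hend, hTeq⟩ := BP.testSet_spec hH
  have hcl : ∀ i, ω (π i) = false := fun i => by
    rw [hagree _ (BP.site_mem_box hδ (hbox i).1 (hbox i).2)]
    exact hmem i
  apply BP.stable_cross_of_plaquettes ω hδ hB k π hinj hadj hcl hbox hstart hend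
  · intro z hz
    apply hT
    rw [hTeq, BP.testOf_mem]
    rw [BP.mem_plaq] at hz
    obtain ⟨z1, z2⟩ := z
    simp only [Prod.mk.injEq, Prod.ext_iff] at hz ⊢
    omega
  · intro z hz
    apply hT
    rw [hTeq, BP.testOf_mem]
    rw [BP.mem_plaq] at hz
    obtain ⟨z1, z2⟩ := z
    simp only [Prod.mk.injEq, Prod.ext_iff] at hz ⊢
    omega

/-! ### Normalisation of configurations to a finite window -/

lemma BP.normC_on {F : Finset Site} {f : Config} {z : Site} (hz : z ∈ F) :
    BP.normC F f z = f z := if_pos hz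

lemma BP.normC_off {F : Finset Site} {f : Config} {z : Site} (hz : z ∉ F) :
    BP.normC F f z = false := if_neg hz

lemma BP.normC_restrict {F G : Finset Site} (hFG : F ⊆ G) (f : Config) :
    BP.normC F (BP.normC G f) = BP.normC F f := funext fun z => by
  by_cases hz : z ∈ F
  · rw [BP.normC_on hz, BP.normC_on hz, BP.normC_on (hFG hz)]
  · rw [BP.normC_off hz, BP.normC_off hz]

lemma BP.normC_of_normalized {F : Finset Site} {f : Config} (hf : ∀ z ∉ F, f z = false) :
    BP.normC F f = f := funext fun z => by
  by_cases hz : z ∈ F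
  · exact BP.normC_on hz
  · rw [BP.normC_off hz, hf z hz]

lemma BP.normC_congr {F : Finset Site} {f g : Config} (h : ∀ z ∈ F, f z = g z) :
    BP.normC F f = BP.normC F g := funext fun z => by
  by_cases hz : z ∈ F
  · rw [BP.normC_on hz, BP.normC_on hz, h z hz]
  · rw [BP.normC_off hz, BP.normC_off hz]

/-! ### The exploration stages -/

noncomputable def BP.Cj (δ b hh : ℝ) (j : ℕ) : Finset Site := BP.box δ (b + 4*δ*j) hh

noncomputable def BP.tst (δ b hh : ℝ) (i : ℕ) (σ : Config) : Finset Site :=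
  BP.testSet {z | BP.normC (BP.Cj δ b hh i) σ z = false} δ (b + 4*δ*i) hh

def BP.bad (δ b hh : ℝ) (j : ℕ) (σ : Config) : Prop :=
  HCross {z | BP.normC (BP.Cj δ b hh j) σ z = false} δ (b + 4*δ*j) hh ∧
  ∀ i, 1 ≤ i → i < j → ∃ t ∈ BP.tst δ b hh i σ, σ t = true

open Classical in
noncomputable def BP.SS (δ b hh : ℝ) (j : ℕ) : Finset Config :=
  ((Finset.univ : Finset (↥(BP.Cj δ b hh j) → Bool)).image
    (fun g z => if hz : z ∈ BP.Cj δ b hh j then g ⟨z, hz⟩ else false)).filter (BP.bad δ b hh j)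

noncomputable def BP.W (δ b hh : ℝ) (j : ℕ) : Set Config :=
  ⋃ σ ∈ BP.SS δ b hh j, BP.Cyl (BP.Cj δ b hh j) σ

lemma BP.mem_SS {δ b hh : ℝ} {j : ℕ} {σ : Config} :
    σ ∈ BP.SS δ b hh j ↔ (∀ z ∉ BP.Cj δ b hh j, σ z = false) ∧ BP.bad δ b hh j σ := by
  classical
  unfold BP.SS
  rw [Finset.mem_filter]
  constructor
  · rintro ⟨himg, hbad⟩
    refine ⟨?_, hbad⟩
    rw [Finset.mem_image] at himg
    obtain ⟨g, _, rfl⟩ := himg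
    intro z hz
    exact dif_neg hz
  · rintro ⟨hnorm, hbad⟩
    refine ⟨?_, hbad⟩
    rw [Finset.mem_image]
    refine ⟨fun zh => σ zh.1, Finset.mem_univ _, ?_⟩
    funext z
    by_cases hz : z ∈ BP.Cj δ b hh j
    · rw [dif_pos hz]
    · rw [dif_neg hz, hnorm z hz]

lemma BP.Cj_mono {δ b hh : ℝ} (hδ : 0 < δ) {i j : ℕ} (hij : i ≤ j) :
    BP.Cj δ b hh i ⊆ BP.Cj δ b hh j := by
  apply BP.box_mono hδ
  have : (i:ℝ) ≤ j := by exact_mod_cast hij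
  nlinarith

lemma BP.stage_props {δ b hh : ℝ} (hδ : 0 < δ) (hb : 0 < b) {i : ℕ} (hi : 1 ≤ i) {σ : Config}
    (hcr : HCross {z | BP.normC (BP.Cj δ b hh i) σ z = false} δ (b + 4*δ*i) hh) :
    (∀ t ∈ BP.tst δ b hh i σ, t ∉ BP.Cj δ b hh i) ∧
    (∀ t ∈ BP.tst δ b hh i σ, t ∈ BP.Cj δ b hh (i+1)) := by
  obtain ⟨k, π, ⟨hinj, hadj, hmem⟩, hbox, hstart, hend, hTeq⟩ := BP.testSet_spec hcr
  have hbnds := BP.testOf_bounds hδ (hbox 0).1 (hbox 0).2 hstart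
      (hbox (Fin.last k)).1 (hbox (Fin.last k)).2 hend
  constructor
  · intro t ht
    unfold BP.tst at ht
    rw [hTeq] at ht
    intro hC
    rw [BP.Cj, BP.mem_box hδ] at hC
    exact (hbnds t ht).1 (abs_lt.mpr hC.1)
  · intro t ht
    unfold BP.tst at ht
    rw [hTeq] at ht
    obtain ⟨_, hb1, hb2⟩ := hbnds t ht
    rw [BP.Cj, BP.mem_box hδ]
    have he : b + 4*δ*((i:ℕ)+1 : ℕ) = (b + 4*δ*i) + 4*δ := by push_cast; ring
    rw [he]
    rw [abs_lt] at hb1 hb2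
    constructor
    · constructor <;> [linarith [hb1.1]; linarith [hb1.2]]
    · exact ⟨hb2.1, hb2.2⟩

lemma BP.tst_card {δ b hh : ℝ} (i : ℕ) (σ : Config) : (BP.tst δ b hh i σ).card ≤ 8 := by
  unfold BP.tst
  by_cases hcr : HCross {z | BP.normC (BP.Cj δ b hh i) σ z = false} δ (b + 4*δ*i) hh
  · obtain ⟨k, π, _, _, _, _, hTeq⟩ := BP.testSet_spec hcr
    rw [hTeq]
    exact BP.testOf_card _ _
  · rw [BP.testSet, dif_neg hcr]
    simp

lemma BP.cross_down {δ b hh : ℝ} (hδ : 0 < δ) (hb : 0 < b) {σ : Config} {i j : ℕ}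
    (hij : i ≤ j)
    (hcr : HCross {z | BP.normC (BP.Cj δ b hh j) σ z = false} δ (b + 4*δ*j) hh) :
    HCross {z | BP.normC (BP.Cj δ b hh i) σ z = false} δ (b + 4*δ*i) hh := by
  have hbji : (0:ℝ) < b + 4*δ*i := by positivity
  have hle : b + 4*δ*i ≤ b + 4*δ*j := by
    have : (i:ℝ) ≤ j := by exact_mod_cast hij
    nlinarith
  have h1 := BP.extract hδ hbji hle hcr
  refine BP.hcross_congr hδ (σA := BP.normC (BP.Cj δ b hh j) σ) ?_ h1
  intro z hz
  have hzi : z ∈ BP.Cj δ b hh i := by rw [BP.Cj]; exact hz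
  have hzj : z ∈ BP.Cj δ b hh j := BP.Cj_mono hδ hij hzi
  rw [BP.normC_on hzj, BP.normC_on hzi]

lemma BP.cross_norm {δ b hh : ℝ} (hδ : 0 < δ) {ω : Config} (i : ℕ)
    (hcr : HCross {z | ω z = false} δ (b + 4*δ*i) hh) :
    HCross {z | BP.normC (BP.Cj δ b hh i) ω z = false} δ (b + 4*δ*i) hh :=
  BP.hcross_congr hδ
    (fun z hz => (BP.normC_on (show z ∈ BP.Cj δ b hh i from hz)).symm) hcr

set_option maxHeartbeats 4000000 in
/-- Main exploration bound: the bad event has probability at most `(1-pc^8)^(m-1)`. -/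
lemma BP.main_bound (μ : Measure Config) [IsProbabilityMeasure μ]
    (hμ : IsBernoulli (1 - pc) μ) (hpc0 : 0 ≤ pc) (hpc1 : pc ≤ 1)
    (δ b b' h : ℝ) (hδ : 0 < δ) (hb : 0 < b) (hbb : b < b') (hh0 : 0 < h)
    (m : ℕ) (hm1 : 1 ≤ m) (hmb : b + 4*δ*m ≤ b') :
    μ {ω : Config | HCross {z | ω z = false} δ b' (h + δ)
        ∧ ¬ HCross {z | stableClosed ω z} δ b (h + δ)}
      ≤ ENNReal.ofReal (1 - pc^8) ^ (m-1) := by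
  classical
  set hh : ℝ := h + δ with hhdef
  have hbmm : ∀ j : ℕ, (0:ℝ) < b + 4*δ*j := fun j => by positivity
  have hble : ∀ j : ℕ, j ≤ m → b + 4*δ*j ≤ b' := by
    intro j hj
    have hc : (j:ℝ) ≤ m := by exact_mod_cast hj
    nlinarith
  have h4δ : ∀ i : ℕ, 1 ≤ i → 4*δ ≤ b + 4*δ*i := by
    intro i hi
    have hc : (1:ℝ) ≤ i := by exact_mod_cast hi
    nlinarith
  -- Step 1 : the bad event is contained in W m
  have hAW : {ω : Config | HCross {z | ω z = false} δ b' hh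
      ∧ ¬ HCross {z | stableClosed ω z} δ b hh} ⊆ BP.W δ b hh m := by
    intro ω hω
    obtain ⟨hcr', hnst⟩ := hω
    have hcross_i : ∀ i : ℕ, i ≤ m →
        HCross {z | BP.normC (BP.Cj δ b hh i) ω z = false} δ (b + 4*δ*i) hh := by
      intro i hi
      exact BP.cross_norm hδ i (BP.extract hδ (hbmm i) (hble i hi) hcr')
    have hσSS : BP.normC (BP.Cj δ b hh m) ω ∈ BP.SS δ b hh m := by
      rw [BP.mem_SS]
      refine ⟨fun z hz => BP.normC_off hz, ?_, ?_⟩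
      · rw [BP.normC_restrict (subset_refl _)]
        exact hcross_i m le_rfl
      · intro i hi1 him
        by_contra hcon
        push_neg at hcon
        have htsteq : BP.tst δ b hh i (BP.normC (BP.Cj δ b hh m) ω) = BP.tst δ b hh i ω := by
          unfold BP.tst
          rw [BP.normC_restrict (BP.Cj_mono hδ (le_of_lt him))]
        have hcri := hcross_i i (le_of_lt him)
        have hG := BP.stage_props hδ hb hi1 (σ := ω) hcri
        have hTclosed : ∀ t ∈ BP.testSet
            {z | BP.normC (BP.Cj δ b hh i) ω z = false} δ (b + 4*δ*i) hh, ω t = false := by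
          intro t ht
          have ht' : t ∈ BP.tst δ b hh i ω := ht
          have h1 := hcon t (by rw [htsteq]; exact ht')
          have h2 : BP.normC (BP.Cj δ b hh m) ω t = false := by simpa using h1
          have htm : t ∈ BP.Cj δ b hh m := BP.Cj_mono hδ (by omega) (hG.2 t ht')
          rwa [BP.normC_on htm] at h2
        have hstable := BP.test_works ω (BP.normC (BP.Cj δ b hh i) ω) hδ (h4δ i hi1)
          (fun z hz => (BP.normC_on (show z ∈ BP.Cj δ b hh i from hz)).symm) hcri hTclosed
        have hfinal := BP.extract hδ hb (by nlinarith [hbmm i, (by positivity : (0:ℝ) ≤ 4*δ*i)]) hstable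
        exact hnst hfinal
    exact Set.mem_biUnion hσSS (fun z hz => (BP.normC_on hz).symm)
  -- Step 2 : pairwise disjointness of the cylinders
  have hPdisj : ∀ j : ℕ, (↑(BP.SS δ b hh j) : Set Config).PairwiseDisjoint
      (fun σ => BP.Cyl (BP.Cj δ b hh j) σ) := by
    intro j σ1 h1 σ2 h2 hne
    rw [Finset.mem_coe, BP.mem_SS] at h1 h2
    refine Set.disjoint_left.mpr fun ω hω1 hω2 => hne ?_
    funext z
    by_cases hz : z ∈ BP.Cj δ b hh j
    · rw [← hω1 z hz, ← hω2 z hz]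
    · rw [h1.1 z hz, h2.1 z hz]
  -- Step 3 : one exploration step
  have hstep : ∀ j : ℕ, 1 ≤ j → j + 1 ≤ m →
      μ (BP.W δ b hh (j+1)) ≤ ENNReal.ofReal (1 - pc^8) * μ (BP.W δ b hh j) := by
    intro j hj1 hjm
    have hincl : BP.W δ b hh (j+1) ⊆
        ⋃ σ ∈ BP.SS δ b hh j,
          (BP.Cyl (BP.Cj δ b hh j) σ ∩ {ω | ∃ t ∈ BP.tst δ b hh j σ, ω t = true}) := by
      intro ω hω
      obtain ⟨σ', hσ', hωC⟩ := Set.mem_iUnion₂.mp hω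
      rw [BP.mem_SS] at hσ'
      obtain ⟨hσ'norm, hcr1, htests⟩ := hσ'
      have hcross_i : ∀ i : ℕ, i ≤ j + 1 →
          HCross {z | BP.normC (BP.Cj δ b hh i) σ' z = false} δ (b + 4*δ*i) hh :=
        fun i hi => BP.cross_down hδ hb hi hcr1
      have hσSS : BP.normC (BP.Cj δ b hh j) σ' ∈ BP.SS δ b hh j := by
        rw [BP.mem_SS]
        refine ⟨fun z hz => BP.normC_off hz, ?_, ?_⟩
        · rw [BP.normC_restrict (subset_refl _)]
          exact hcross_i j (by omega)
        · intro i hi1 hij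
          obtain ⟨t, htmem, htval⟩ := htests i hi1 (by omega)
          have htsteq : BP.tst δ b hh i (BP.normC (BP.Cj δ b hh j) σ') = BP.tst δ b hh i σ' := by
            unfold BP.tst
            rw [BP.normC_restrict (BP.Cj_mono hδ (by omega))]
          have hG := BP.stage_props hδ hb hi1 (hcross_i i (by omega))
          have htCj : t ∈ BP.Cj δ b hh j :=
            BP.Cj_mono hδ (by omega) (hG.2 t htmem)
          refine ⟨t, by rw [htsteq]; exact htmem, ?_⟩
          rw [BP.normC_on htCj]
          exact htval
      refine Set.mem_biUnion hσSS ⟨?_, ?_⟩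
      · intro z hz
        have hzj1 : z ∈ BP.Cj δ b hh (j+1) := BP.Cj_mono hδ (by omega) hz
        rw [hωC z hzj1, BP.normC_on hz]
      · obtain ⟨t, htmem, htval⟩ := htests j hj1 (by omega)
        have htsteq : BP.tst δ b hh j (BP.normC (BP.Cj δ b hh j) σ') = BP.tst δ b hh j σ' := by
          unfold BP.tst
          rw [BP.normC_restrict (BP.Cj_mono hδ (by omega))]
        have hG := BP.stage_props hδ hb hj1 (hcross_i j (by omega))
        have htCj1 : t ∈ BP.Cj δ b hh (j+1) := hG.2 t htmem
        exact ⟨t, by rw [htsteq]; exact htmem, by rw [hωC t htCj1]; exact htval⟩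
    calc μ (BP.W δ b hh (j+1))
        ≤ μ (⋃ σ ∈ BP.SS δ b hh j,
            (BP.Cyl (BP.Cj δ b hh j) σ ∩ {ω | ∃ t ∈ BP.tst δ b hh j σ, ω t = true})) :=
          measure_mono hincl
      _ ≤ ∑ σ ∈ BP.SS δ b hh j,
            μ (BP.Cyl (BP.Cj δ b hh j) σ ∩ {ω | ∃ t ∈ BP.tst δ b hh j σ, ω t = true}) :=
          measure_biUnion_finset_le _ _
      _ ≤ ∑ σ ∈ BP.SS δ b hh j,
            ENNReal.ofReal (1 - pc^8) * μ (BP.Cyl (BP.Cj δ b hh j) σ) := by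
          apply Finset.sum_le_sum
          intro σ hσ
          rw [BP.mem_SS] at hσ
          obtain ⟨hσnorm, hcrσ, _⟩ := hσ
          have hG := BP.stage_props hδ hb hj1 hcrσ
          have hkey := BP.cyl_fail_le hμ (by linarith) (by linarith)
            (BP.Cj δ b hh j) (BP.tst δ b hh j σ) hG.1 (BP.tst_card _ _) σ
          have hco : (1 : ℝ) - (1 - (1 - pc))^8 = 1 - pc^8 := by ring
          rw [hco] at hkey
          exact hkey
      _ = ENNReal.ofReal (1 - pc^8) *
            ∑ σ ∈ BP.SS δ b hh j, μ (BP.Cyl (BP.Cj δ b hh j) σ) := by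
          rw [Finset.mul_sum]
      _ = ENNReal.ofReal (1 - pc^8) * μ (BP.W δ b hh j) := by
          unfold BP.W
          rw [measure_biUnion_finset (hPdisj j) (fun σ _ => BP.measurableSet_cyl _ _)]
  -- Step 4 : induction over the stages
  have hWm : ∀ j : ℕ, 1 ≤ j → j ≤ m → μ (BP.W δ b hh j) ≤ ENNReal.ofReal (1 - pc^8) ^ (j-1) := by
    intro j
    induction j with
    | zero => intro h0; omega
    | succ n ih =>
      intro _ hnm
      rcases Nat.eq_zero_or_pos n with hn0 | hn1
      · subst hn0
        simpa using prob_le_one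
      · calc μ (BP.W δ b hh (n+1))
            ≤ ENNReal.ofReal (1-pc^8) * μ (BP.W δ b hh n) := hstep n hn1 (by omega)
          _ ≤ ENNReal.ofReal (1-pc^8) * ENNReal.ofReal (1-pc^8) ^ (n-1) :=
              mul_le_mul_right (ih hn1 (by omega)) _
          _ = ENNReal.ofReal (1-pc^8) ^ (n+1-1) := by
              rw [← pow_succ']
              congr 1
              omega
  exact le_trans (measure_mono hAW) (hWm m hm1 le_rfl)

lemma BP.pc_nonneg : 0 ≤ pc := by
  unfold pc
  exact Real.sInf_nonneg (fun x hx => hx.1.1)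

lemma BP.pc_le_one : pc ≤ 1 := by
  by_cases hne : {p : ℝ | p ∈ Set.Icc (0 : ℝ) 1 ∧
      ∀ μ : Measure Config, IsProbabilityMeasure μ → IsBernoulli p μ →
        0 < μ {ω : Config | ∃ x : Site, InfClusterIn {z | ω z = true} adj x}}.Nonempty
  · obtain ⟨p, hp⟩ := hne
    refine le_trans (csInf_le ⟨0, fun x hx => hx.1.1⟩ hp) hp.1.2
  · rw [Set.not_nonempty_iff_eq_empty] at hne
    unfold pc
    rw [hne, Real.sInf_empty]
    norm_num

lemma BP.single_false {p : ℝ} {μ : Measure Config} (hμ : IsBernoulli p μ) (z : Site) :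
    μ {ω : Config | ω z = false} = ENNReal.ofReal (1 - p) := by
  have h2 := hμ {z} (fun _ => false)
  have hsetEq : {ω : Config | ∀ x ∈ ({z} : Finset Site), ω x = (fun _ => false) x}
      = {ω : Config | ω z = false} := by
    ext ω; simp
  rw [hsetEq] at h2
  rw [h2, Finset.prod_singleton]
  norm_num

lemma BP.single_true {p : ℝ} {μ : Measure Config} (hμ : IsBernoulli p μ) (z : Site) :
    μ {ω : Config | ω z = true} = ENNReal.ofReal p := by
  have h2 := hμ {z} (fun _ => true)
  have hsetEq : {ω : Config | ∀ x ∈ ({z} : Finset Site), ω x = (fun _ => true) x}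
      = {ω : Config | ω z = true} := by
    ext ω; simp
  rw [hsetEq] at h2
  rw [h2, Finset.prod_singleton]
  norm_num

theorem closed_crossing_survives_bootstrap'
    (μ : Measure Config) [IsProbabilityMeasure μ] (hμ : IsBernoulli (1 - pc) μ) :
    ∃ (α K : ℝ), 0 < α ∧ 0 < K ∧
      ∀ (δ b b' h : ℝ), 0 < δ → 0 < b → b < b' → 0 < h →
        μ {ω : Config | HCross {z | ω z = false} δ b' (h + δ)
            ∧ ¬ HCross {z | stableClosed ω z} δ b (h + δ)}
          ≤ ENNReal.ofReal (2 * K * Real.exp (-α * (b' - b) / (4 * δ))) := by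
  classical
  have hpc0 : 0 ≤ pc := BP.pc_nonneg
  have hpc1 : pc ≤ 1 := BP.pc_le_one
  by_cases hq0 : pc = 0
  · -- all sites are open a.s., so there is a.s. no closed crossing
    refine ⟨1, 1, one_pos, one_pos, ?_⟩
    intro δ b b' h hδ hb hbb hh0
    have hsub : {ω : Config | HCross {z | ω z = false} δ b' (h + δ)
        ∧ ¬ HCross {z | stableClosed ω z} δ b (h + δ)}
        ⊆ ⋃ z : Site, {ω : Config | ω z = false} := by
      rintro ω ⟨hcr, _⟩
      obtain ⟨k, π, ⟨_, _, hmem⟩, _⟩ := hcr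
      exact Set.mem_iUnion.mpr ⟨π 0, hmem 0⟩
    have hnull := measure_mono_null hsub (measure_iUnion_null fun z => by
      rw [BP.single_false hμ z]
      simp [hq0])
    exact le_trans (le_of_eq hnull) zero_le
  by_cases hq1 : pc = 1
  · -- all sites are closed a.s., so there is a.s. a stable crossing
    refine ⟨1, 1, one_pos, one_pos, ?_⟩
    intro δ b b' h hδ hb hbb hh0
    have hsub : {ω : Config | HCross {z | ω z = false} δ b' (h + δ)
        ∧ ¬ HCross {z | stableClosed ω z} δ b (h + δ)}
        ⊆ ⋃ z : Site, {ω : Config | ω z = true} := by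
      rintro ω ⟨_, hnst⟩
      by_contra hc
      simp only [Set.mem_iUnion, Set.mem_setOf_eq, not_exists] at hc
      have hall : ∀ z, ω z = false := fun z => by
        have := hc z
        simpa using this
      have hstable : ∀ z : Site, z ∈ {z | stableClosed ω z} :=
        fun z n => BP.allClosed_evolve ω hall n z
      exact hnst (BP.straight_cross _ hstable hδ hb (by linarith))
    have hnull := measure_mono_null hsub (measure_iUnion_null fun z => by
      rw [BP.single_true hμ z]
      simp [hq1])
    exact le_trans (le_of_eq hnull) zero_le
  · -- main case : 0 < pc < 1
    have hpcpos : 0 < pc := lt_of_le_of_ne hpc0 (Ne.symm hq0)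
    have hpclt : pc < 1 := lt_of_le_of_ne hpc1 hq1
    set β : ℝ := 1 - pc^8 with hβdef
    have hβpos : 0 < β := by
      have := pow_lt_one₀ hpc0 hpclt (by norm_num : (8:ℕ) ≠ 0)
      rw [hβdef]; linarith
    have hβlt : β < 1 := by
      have := pow_pos hpcpos 8
      rw [hβdef]; linarith
    set α : ℝ := -Real.log β with hαdef
    have hα : 0 < α := by
      rw [hαdef, neg_pos]
      exact Real.log_neg hβpos hβlt
    refine ⟨α, Real.exp (2*α), hα, Real.exp_pos _, ?_⟩
    intro δ b b' h hδ hb hbb hh0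
    set L : ℝ := (b' - b)/(4*δ) with hLdef
    have hLpos : 0 < L := by
      rw [hLdef]
      have hbb' : (0:ℝ) < b' - b := by linarith
      positivity
    have hexparg : -α * (b' - b) / (4 * δ) = 2*α - α*L - 2*α := by
      rw [hLdef]; ring
    by_cases hL2 : L ≤ 2
    · -- short range : the bound is at least 1
      refine le_trans prob_le_one ?_
      rw [← ENNReal.ofReal_one]
      apply ENNReal.ofReal_le_ofReal
      have harg : -α * (b' - b) / (4 * δ) = -(α * L) := by rw [hLdef]; ring
      rw [harg]
      have h1 : Real.exp (2*α) * Real.exp (-(α*L)) = Real.exp (2*α - α*L) := by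
        rw [← Real.exp_add]; ring_nf
      calc (1:ℝ) ≤ Real.exp (2*α - α*L) := Real.one_le_exp (by nlinarith)
        _ ≤ 2 * (Real.exp (2*α) * Real.exp (-(α*L))) := by
            rw [h1]; nlinarith [Real.exp_pos (2*α - α*L)]
        _ = 2 * Real.exp (2*α) * Real.exp (-(α*L)) := by ring
    · push_neg at hL2
      set m : ℕ := ⌊L⌋.toNat with hmdef
      have hfloor2 : (2:ℤ) ≤ ⌊L⌋ := Int.le_floor.mpr (by push_cast; linarith)
      have hm2 : 2 ≤ m := by rw [hmdef]; omega
      have hmcastL : (m:ℝ) ≤ L := by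
        rw [hmdef]
        rw [show ((⌊L⌋.toNat : ℕ) : ℝ) = ((⌊L⌋.toNat : ℤ) : ℝ) by push_cast; ring]
        rw [Int.toNat_of_nonneg (by omega)]
        exact Int.floor_le L
      have hmlow : L - 1 ≤ (m:ℝ) := by
        rw [hmdef]
        rw [show ((⌊L⌋.toNat : ℕ) : ℝ) = ((⌊L⌋.toNat : ℤ) : ℝ) by push_cast; ring]
        rw [Int.toNat_of_nonneg (by omega)]
        linarith [Int.sub_one_lt_floor L]
      have h4δL : 4*δ*L = b' - b := by
        rw [hLdef]; field_simp
      have hmb : b + 4*δ*m ≤ b' := by nlinarith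
      have hmain := BP.main_bound μ hμ hpc0 hpc1 δ b b' h hδ hb hbb hh0 m (by omega) hmb
      refine le_trans hmain ?_
      rw [← ENNReal.ofReal_pow hβpos.le]
      apply ENNReal.ofReal_le_ofReal
      have hβexp : β = Real.exp (-α) := by
        rw [hαdef, neg_neg, Real.exp_log hβpos]
      rw [hβexp, ← Real.exp_nat_mul]
      have harg : -α * (b' - b) / (4 * δ) = -(α * L) := by rw [hLdef]; ring
      rw [harg]
      have hcast : ((m-1 : ℕ):ℝ) = (m:ℝ) - 1 := by
        have : 1 ≤ m := by omega
        push_cast [this]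
        ring
      have hexple : ((m-1 : ℕ):ℝ) * (-α) ≤ 2*α - α*L := by
        rw [hcast]
        nlinarith [hα.le, hmlow]
      calc Real.exp (((m-1 : ℕ):ℝ) * (-α)) ≤ Real.exp (2*α - α*L) :=
            Real.exp_le_exp.mpr hexple
        _ ≤ 2 * (Real.exp (2*α) * Real.exp (-(α*L))) := by
            rw [show Real.exp (2*α) * Real.exp (-(α*L)) = Real.exp (2*α - α*L) by
              rw [← Real.exp_add]; ring_nf]
            nlinarith [Real.exp_pos (2*α - α*L)]
        _ = 2 * Real.exp (2*α) * Real.exp (-(α*L)) := by ring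

/-- At `p = p_c^*`: there are constants `α > 0` and `K` such that, for any
`0 < b < b'` and any mesh `δ > 0`, if at time `0` there is a closed horizontal
`ℤ²`-crossing of `R(b', h+δ)` then, except on an event of probability at most
`2K exp(-α (b'-b)/(4δ))`, the final bootstrapped configuration contains a
closed horizontal `ℤ²`-crossing of `R(b, h+δ)`. -/
theorem closed_crossing_survives_bootstrap
    (μ : Measure Config) [IsProbabilityMeasure μ] (hμ : IsBernoulli (1 - pc) μ) :
    ∃ (α K : ℝ), 0 < α ∧ 0 < K ∧
      ∀ (δ b b' h : ℝ), 0 < δ → 0 < b → b < b' → 0 < h →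
        μ {ω : Config | HCross {z | ω z = false} δ b' (h + δ)
            ∧ ¬ HCross {z | stableClosed ω z} δ b (h + δ)}
          ≤ ENNReal.ofReal (2 * K * Real.exp (-α * (b' - b) / (4 * δ))) := by
  exact closed_crossing_survives_bootstrap' μ hμ
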